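/- For n = 3, the matrix S_1·S_2 (product of the first two Apollonian generators) has order 3 but for n ≥ 4 the product S_1·S_2 has two eigenvalues e^{±iθ_n} with cos(θ_n/2) = 1/(n-1), and in particular S_1 S_2 has infinite order for n ≥ 4. -/

import Mathlib

open Matrix

/-- Descartes quadratic form matrix in dimension `n`. -/
noncomputable def QD (n : ℕ) : Matrix (Fin (n+2)) (Fin (n+2)) ℝ :=
  1 - (n : ℝ)⁻¹ • Matrix.of (fun _ _ => (1 : ℝ))

/-- Wilker quadratic form matrix in dimension `n`. -/
def QW (n : ℕ) : Matrix (Fin (n+2)) (Fin (n+2)) ℝ :=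
  Matrix.of (fun i j =>
    if (i = 0 ∧ j = 1) ∨ (i = 1 ∧ j = 0) then (-4 : ℝ)
    else if i = j then (if 2 ≤ (i : ℕ) then 2 else 0) else 0)

/-- Apollonian group generator `S j` in dimension `n`. -/
noncomputable def S (n : ℕ) (j : Fin (n+2)) : Matrix (Fin (n+2)) (Fin (n+2)) ℝ :=
  Matrix.of (fun i k =>
    if i = j then (if k = j then -1 else 2 / ((n : ℝ) - 1))
    else if i = k then 1 else 0)

/-- Dual Apollonian group generator `S j ^⊥` in dimension `n`. -/
def Sperp (n : ℕ) (j : Fin (n+2)) : Matrix (Fin (n+2)) (Fin (n+2)) ℝ :=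
  Matrix.of (fun i k =>
    if k = j then (if i = j then -1 else 2)
    else if i = k then 1 else 0)

private lemma mulVec_two {m : ℕ} (A : Matrix (Fin (m+2)) (Fin (m+2)) ℂ) (a b : ℂ)
    (i : Fin (m+2)) :
    A.mulVec (fun k => if k = 0 then a else if k = 1 then b else 0) i
      = A i 0 * a + A i 1 * b := by
  simp [Matrix.mulVec, dotProduct, Fin.sum_univ_succ, Fin.succ_ne_zero, Fin.succ_succ_ne_one]

private lemma exp_sq (t : ℝ) : Complex.exp (t*Complex.I)^2 + 1
    = ((2*Real.cos t : ℝ) : ℂ) * Complex.exp (t*Complex.I) := by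
  push_cast
  rw [sq, show (2:ℂ) * Complex.cos t * Complex.exp (t*Complex.I)
      = (Complex.exp (t*Complex.I) + Complex.exp (-t*Complex.I)) * Complex.exp (t*Complex.I) by
        rw [← Complex.two_cos]]
  rw [add_mul, ← Complex.exp_add]
  simp [← Complex.exp_add]

private lemma map_mul' {N : ℕ} (A B : Matrix (Fin N) (Fin N) ℝ) :
    (A * B).map Complex.ofReal = A.map Complex.ofReal * B.map Complex.ofReal := by
  ext i j
  simp [Matrix.map_apply, Matrix.mul_apply]

private lemma map_pow' {N : ℕ} (A : Matrix (Fin N) (Fin N) ℝ) (k : ℕ) :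
    (A ^ k).map Complex.ofReal = (A.map Complex.ofReal) ^ k := by
  induction k with
  | zero => simp [Matrix.map_one]
  | succ k ih => rw [pow_succ, pow_succ, map_mul', ih]

private lemma pow_mulVec {N : ℕ} (A : Matrix (Fin N) (Fin N) ℂ) (lam : ℂ) (v : Fin N → ℂ)
    (h : A.mulVec v = lam • v) (k : ℕ) : (A ^ k).mulVec v = lam ^ k • v := by
  induction k with
  | zero => simp [Matrix.one_mulVec]
  | succ k ih =>
      rw [pow_succ, ← Matrix.mulVec_mulVec, h, Matrix.mulVec_smul, ih, smul_smul, ← pow_succ']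

private lemma eigen (n : ℕ) (hn : 4 ≤ n) (lam : ℂ)
    (hl : lam ^ 2 + 1 = (((2/((n:ℝ)-1))^2 - 2 : ℝ) : ℂ) * lam) :
    ∃ v : Fin (n+2) → ℂ, v ≠ 0 ∧
      ((S n 0 * S n 1).map (Complex.ofReal)).mulVec v = lam • v := by
  have hn4 : (4:ℝ) ≤ (n:ℝ) := by exact_mod_cast hn
  have hpos : (0:ℝ) < (n:ℝ) - 1 := by linarith
  have hne : ((n:ℝ) - 1) ≠ 0 := ne_of_gt hpos
  have hl'' : lam ^ 2 + 1 = ((2/((n:ℂ)-1))^2 - 2) * lam := by rw [hl]; push_cast; ring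
  refine ⟨fun k => if k = 0 then lam + 1 else if k = 1 then ((2/((n:ℝ)-1) : ℝ) : ℂ) else 0,
    ?_, ?_⟩
  · intro h
    have h1 := congrFun h 1
    simp only [one_ne_zero, if_false, Pi.zero_apply, if_neg (one_ne_zero (α := Fin (n+2))),
      if_pos rfl] at h1
    have h2 := Complex.ofReal_eq_zero.mp h1
    rw [div_eq_zero_iff] at h2
    rcases h2 with h2 | h2
    · norm_num at h2
    · exact hne h2
  · rw [map_mul', ← Matrix.mulVec_mulVec]
    have hw : ((S n 1).map Complex.ofReal).mulVec
        (fun k => if k = 0 then lam + 1 else if k = 1 then ((2/((n:ℝ)-1) : ℝ) : ℂ) else 0)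
        = fun k => if k = 0 then lam + 1
            else if k = 1 then ((2/((n:ℝ)-1) : ℝ) : ℂ)*(lam+1) - ((2/((n:ℝ)-1) : ℝ) : ℂ)
            else 0 := by
      funext i
      rw [mulVec_two]
      by_cases hi0 : i = 0
      · subst hi0; simp [S, Matrix.map_apply]
      · by_cases hi1 : i = 1
        · subst hi1; simp [S, Matrix.map_apply]; push_cast; ring
        · simp [S, Matrix.map_apply, hi0, hi1]
    rw [hw]
    funext i
    rw [mulVec_two]
    by_cases hi0 : i = 0
    · subst hi0
      simp [S, Matrix.map_apply, Pi.smul_apply, smul_eq_mul]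
      push_cast
      linear_combination -hl''
    · by_cases hi1 : i = 1
      · subst hi1
        simp [S, Matrix.map_apply, Pi.smul_apply, smul_eq_mul]
        push_cast
        ring
      · simp [S, Matrix.map_apply, hi0, hi1, Pi.smul_apply, smul_eq_mul]

private lemma not_integral (n : ℕ) (hn : 4 ≤ n)
    (hsum : IsIntegral ℤ (algebraMap ℚ ℂ ((2/((n:ℚ)-1))^2 - 2))) : False := by
  rw [isIntegral_algebraMap_iff (algebraMap ℚ ℂ).injective] at hsum
  obtain ⟨z, hz⟩ := IsIntegrallyClosed.isIntegral_iff.mp hsum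
  have hnq : (4:ℚ) ≤ (n:ℚ) := by exact_mod_cast hn
  have hposq : (0:ℚ) < (n:ℚ) - 1 := by linarith
  have hb1 : (2/((n:ℚ)-1))^2 - 2 < -1 := by
    have h1 : 2/((n:ℚ)-1) ≤ 2/3 := by
      rw [div_le_div_iff₀ hposq (by norm_num)]; linarith
    nlinarith [le_of_lt (show (0:ℚ) < 2/((n:ℚ)-1) by positivity)]
  have hb2 : (-2 : ℚ) < (2/((n:ℚ)-1))^2 - 2 := by
    have : (0:ℚ) < 2/((n:ℚ)-1) := by positivity
    nlinarith
  have hz' : (z : ℚ) = (2/((n:ℚ)-1))^2 - 2 := by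
    rw [← hz, eq_intCast]
  rw [← hz'] at hb1 hb2
  have hzi1 : z < -1 := by exact_mod_cast hb1
  have hzi2 : (-2:ℤ) < z := by exact_mod_cast hb2
  omega

theorem S1S2_order (n : ℕ) :
    orderOf (S 3 0 * S 3 1) = 3 ∧
    (4 ≤ n →
      ((∃ v : Fin (n+2) → ℂ, v ≠ 0 ∧
          ((S n 0 * S n 1).map (Complex.ofReal)).mulVec v =
            Complex.exp ((2 * Real.arccos (1 / ((n : ℝ) - 1)) : ℝ) * Complex.I) • v) ∧
       (∃ v : Fin (n+2) → ℂ, v ≠ 0 ∧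
          ((S n 0 * S n 1).map (Complex.ofReal)).mulVec v =
            Complex.exp (-((2 * Real.arccos (1 / ((n : ℝ) - 1)) : ℝ) * Complex.I)) • v) ∧
       (∀ k : ℕ, 1 ≤ k → (S n 0 * S n 1) ^ k ≠ 1))) := by
  constructor
  · -- order 3 for n = 3
    haveI : Fact (Nat.Prime 3) := ⟨by norm_num⟩
    have hS0 : S 3 0 = !![-1,1,1,1,1; 0,1,0,0,0; 0,0,1,0,0; 0,0,0,1,0; 0,0,0,0,1] := by
      ext i j
      fin_cases i <;> fin_cases j <;>
        norm_num [S, Matrix.vecHead, Matrix.vecTail, Function.comp]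
    have hS1 : S 3 1 = !![1,0,0,0,0; 1,-1,1,1,1; 0,0,1,0,0; 0,0,0,1,0; 0,0,0,0,1] := by
      ext i j
      fin_cases i <;> fin_cases j <;>
        norm_num [S, Fin.ext_iff, Matrix.vecHead, Matrix.vecTail, Function.comp]
    have hM1 : S 3 0 * S 3 1
        = !![0,-1,2,2,2; 1,-1,1,1,1; 0,0,1,0,0; 0,0,0,1,0; 0,0,0,0,1] := by
      rw [hS0, hS1]
      ext i j
      fin_cases i <;> fin_cases j <;>
        norm_num [Matrix.mul_apply, Fin.sum_univ_succ, Fin.ext_iff, Matrix.vecHead,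
          Matrix.vecTail, Function.comp]
    have hM2 : (!![0,-1,2,2,2; 1,-1,1,1,1; 0,0,1,0,0; 0,0,0,1,0; 0,0,0,0,1] :
        Matrix (Fin 5) (Fin 5) ℝ) * !![0,-1,2,2,2; 1,-1,1,1,1; 0,0,1,0,0; 0,0,0,1,0; 0,0,0,0,1]
        = !![-1,1,1,1,1; -1,0,2,2,2; 0,0,1,0,0; 0,0,0,1,0; 0,0,0,0,1] := by
      ext i j
      fin_cases i <;> fin_cases j <;>
        norm_num [Matrix.mul_apply, Fin.sum_univ_succ, Fin.ext_iff, Matrix.vecHead,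
          Matrix.vecTail, Function.comp]
    have hM3 : (!![-1,1,1,1,1; -1,0,2,2,2; 0,0,1,0,0; 0,0,0,1,0; 0,0,0,0,1] :
        Matrix (Fin 5) (Fin 5) ℝ) * !![0,-1,2,2,2; 1,-1,1,1,1; 0,0,1,0,0; 0,0,0,1,0; 0,0,0,0,1]
        = 1 := by
      ext i j
      fin_cases i <;> fin_cases j <;>
        norm_num [Matrix.mul_apply, Fin.sum_univ_succ, Matrix.one_apply, Fin.ext_iff,
          Matrix.vecHead, Matrix.vecTail, Function.comp]
    refine orderOf_eq_prime ?_ ?_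
    · rw [pow_succ, pow_succ, pow_one, hM1, hM2, hM3]
    · intro h
      rw [hM1, ← Matrix.ext_iff] at h
      have h01 := h 0 1
      norm_num [Matrix.one_apply, Matrix.vecHead, Matrix.vecTail, Function.comp] at h01
  · intro hn
    have hn4 : (4:ℝ) ≤ (n:ℝ) := by exact_mod_cast hn
    have hpos : (0:ℝ) < (n:ℝ) - 1 := by linarith
    have hne : ((n:ℝ) - 1) ≠ 0 := ne_of_gt hpos
    set x : ℝ := 1 / ((n:ℝ) - 1) with hx
    have hx0 : 0 < x := by positivity
    have hx1 : x ≤ 1/3 := by rw [hx]; rw [div_le_div_iff₀ hpos (by norm_num)]; linarith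
    have hcos : 2 * Real.cos (2 * Real.arccos x) = (2/((n:ℝ)-1))^2 - 2 := by
      rw [Real.cos_two_mul, Real.cos_arccos (by linarith) (by linarith)]
      rw [hx]; field_simp
    set t : ℝ := 2 * Real.arccos x with ht
    have hlplus : (Complex.exp ((t:ℝ) * Complex.I)) ^ 2 + 1
        = (((2/((n:ℝ)-1))^2 - 2 : ℝ) : ℂ) * Complex.exp ((t:ℝ) * Complex.I) :=
      (exp_sq t).trans (by rw [hcos])
    have hneg : -((t:ℂ) * Complex.I) = ((-t : ℝ) : ℂ) * Complex.I := by push_cast; ring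
    have hlminus : (Complex.exp (-((t:ℝ) * Complex.I))) ^ 2 + 1
        = (((2/((n:ℝ)-1))^2 - 2 : ℝ) : ℂ) * Complex.exp (-((t:ℝ) * Complex.I)) := by
      rw [hneg]
      exact (exp_sq (-t)).trans (by rw [Real.cos_neg, hcos])
    refine ⟨eigen n hn _ hlplus, eigen n hn _ hlminus, ?_⟩
    intro k hk hM
    have hk0 : k ≠ 0 := by omega
    obtain ⟨v, hv0, hveq⟩ := eigen n hn _ hlplus
    set lam : ℂ := Complex.exp ((t:ℝ) * Complex.I) with hlam
    have hpw := pow_mulVec _ lam v hveq k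
    rw [← map_pow', hM, Matrix.map_one _ Complex.ofReal_zero Complex.ofReal_one,
      Matrix.one_mulVec] at hpw
    have hzero : (lam ^ k - 1) • v = 0 := by
      rw [sub_smul, one_smul, ← hpw, sub_self]
    have hlk : lam ^ k = 1 := by
      rcases smul_eq_zero.mp hzero with h | h
      · exact sub_eq_zero.mp h
      · exact absurd h hv0
    set mu : ℂ := Complex.exp (-((t:ℝ) * Complex.I)) with hmu
    have hlm : lam * mu = 1 := by
      rw [hlam, hmu, ← Complex.exp_add]
      simp
    have hmk : mu ^ k = 1 := by
      have := congrArg (· ^ k) hlm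
      simp only [mul_pow, one_pow] at this
      rw [hlk, one_mul] at this
      exact this
    have hint : ∀ z : ℂ, z ^ k = 1 → IsIntegral ℤ z := fun z hz =>
      ⟨Polynomial.X ^ k - Polynomial.C 1, Polynomial.monic_X_pow_sub_C 1 hk0, by simp [hz]⟩
    have hsum : IsIntegral ℤ (lam + mu) := (hint lam hlk).add (hint mu hmk)
    have heq : lam + mu = algebraMap ℚ ℂ ((2/((n:ℚ)-1))^2 - 2) := by
      have h2c : lam + mu = ((2 * Real.cos t : ℝ) : ℂ) := by
        rw [hlam, hmu]
        push_cast
        rw [Complex.two_cos, neg_mul]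
      rw [h2c, hcos, eq_ratCast (algebraMap ℚ ℂ)]
      push_cast
      ring
    rw [heq] at hsum
    exact (not_integral n hn hsum).elim
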